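/- arXiv:1811.12219 — 7 statements merged into one kernel-verified Lean document; each statement's English description precedes it below -/
import Mathlib

section
/- Suppose Λ ≠ F (Λ is a proper additive subgroup of F). If q is a sesquilinear form on E with q(v,v) ∈ Λ for all v ∈ E, then ω_q(v,w) = 0 for all v,w ∈ E. (Hence the assignment q ↦ Q_q on Sesq_σ(E)/X(E,σ,ε,Λ) is injective: ω_q is determined by Q_q.) -/
/-- A sesquilinear form with respect to the involution `σ`:
biadditive and `q (a • v) (b • w) = σ a * q v w * b`. -/
def IsSesq {F E : Type*} [Field F] [AddCommGroup E] [Module F E]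
    (σ : F →+* F) (q : E → E → F) : Prop :=
  (∀ v v' w : E, q (v + v') w = q v w + q v' w) ∧
  (∀ v w w' : E, q v (w + w') = q v w + q v w') ∧
  ∀ (a b : F) (v w : E), q (a • v) (b • w) = σ a * q v w * b

/-- Suppose `Λ ≠ F` is a proper additive subgroup. If `q` is a sesquilinear form on `E` with
`q(v,v) ∈ Λ` for all `v`, then `ω_q(v,w) = 0` for all `v,w`. -/
theorem stmt4 {F E : Type*} [Field F] [AddCommGroup E] [Module F E]
    (σ : F →+* F) (hσ : ∀ a : F, σ (σ a) = a)
    (ε : F) (hε : ε * σ ε = 1)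
    (Λ : AddSubgroup F)
    (hmin : ∀ a : F, a - ε * σ a ∈ Λ)
    (hmax : ∀ a ∈ Λ, a + ε * σ a = 0)
    (hproper : Λ ≠ ⊤)
    (q : E → E → F) (hq : IsSesq σ q)
    (hQ : ∀ v : E, q v v ∈ Λ) :
    ∀ v w : E, q v w + ε * σ (q w v) = 0 := by
  obtain ⟨hadd1, hadd2, hmul⟩ := hq
  intro v w
  -- key membership: σ a * q v w + a * q w v ∈ Λ for every a
  have key : ∀ a : F, σ a * q v w + a * q w v ∈ Λ := by
    intro a
    have h1 : q (a • v) w = σ a * q v w := by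
      have := hmul a 1 v w; simpa using this
    have h2 : q w (a • v) = q w v * a := by
      have := hmul 1 a w v; simpa using this
    have e1 : q (a • v + w) (a • v + w)
        = q (a • v) (a • v) + (σ a * q v w + a * q w v) + q w w := by
      rw [hadd1, hadd2, hadd2, h1, h2]; ring
    have hm := hQ (a • v + w)
    rw [e1] at hm
    have hm' : (q (a • v) (a • v) + (σ a * q v w + a * q w v) + q w w)
        - q (a • v) (a • v) - q w w ∈ Λ :=
      AddSubgroup.sub_mem _ (AddSubgroup.sub_mem _ hm (hQ (a • v))) (hQ w)
    have e2 : q (a • v) (a • v) + (σ a * q v w + a * q w v) + q w w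
        - q (a • v) (a • v) - q w w = σ a * q v w + a * q w v := by ring
    rwa [e2] at hm'
  -- from hmax: σ a * c + a * d = 0 where c, d are the two omegas
  have eqn : ∀ a : F, σ a * (q v w + ε * σ (q w v)) + a * (q w v + ε * σ (q v w)) = 0 := by
    intro a
    have h := hmax _ (key a)
    have hs : σ (σ a * q v w + a * q w v) = a * σ (q v w) + σ a * σ (q w v) := by
      rw [map_add, map_mul, map_mul, hσ]
    rw [hs] at h
    calc σ a * (q v w + ε * σ (q w v)) + a * (q w v + ε * σ (q v w))
        = σ a * q v w + a * q w v + ε * (a * σ (q v w) + σ a * σ (q w v)) := by ring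
      _ = 0 := h
  by_cases hid : ∀ a : F, σ a = a
  · -- σ is the identity
    have hε1 : ε = 1 := by
      by_contra hne
      apply hproper
      rw [AddSubgroup.eq_top_iff']
      intro b
      have h10 : (1 - ε) ≠ 0 := sub_ne_zero.mpr (Ne.symm hne)
      have hb := hmin ((1 - ε)⁻¹ * b)
      rw [hid] at hb
      have : (1 - ε)⁻¹ * b - ε * ((1 - ε)⁻¹ * b) = b := by
        field_simp
      rwa [this] at hb
    -- now Λ contains a * (q v w + q w v) for all a
    have key' : ∀ a : F, a * (q v w + q w v) ∈ Λ := by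
      intro a
      have := key a
      rw [hid] at this
      convert this using 1; ring
    have hs : q v w + q w v = 0 := by
      by_contra hne
      apply hproper
      rw [AddSubgroup.eq_top_iff']
      intro b
      have := key' (b / (q v w + q w v))
      rwa [div_mul_cancel₀ _ hne] at this
    rw [hε1, hid, one_mul, hs]
  · push_neg at hid
    obtain ⟨a₀, ha₀⟩ := hid
    have e1 := eqn 1
    simp only [map_one, one_mul] at e1
    have e2 := eqn a₀
    -- d = -c, so (σ a₀ - a₀) * c = 0
    have hd : q w v + ε * σ (q v w) = -(q v w + ε * σ (q w v)) := by
      linear_combination e1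
    rw [hd] at e2
    have : (σ a₀ - a₀) * (q v w + ε * σ (q w v)) = 0 := by linear_combination e2
    rcases mul_eq_zero.mp this with h | h
    · exact absurd (sub_eq_zero.mp h) ha₀
    · exact h
end

section
/- Suppose it is not the case that both σ = id and F has characteristic 2. Then for every sesquilinear form ω on E satisfying ω(v,w) = ε·σ(ω(w,v)) for all v,w ∈ E, there exists a sesquilinear form q on E with ω_q = ω; that is, the map q ↦ ω_q is surjective onto the ε-Hermitian forms. -/
/-- Suppose it is not the case that both `σ = id` and `char F = 2`. Then every `ε`-Hermitian
sesquilinear form `ω` on `E` (i.e. `ω(v,w) = ε·σ(ω(w,v))`) equals `ω_q` for some sesquilinear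
form `q` on `E`: the map `q ↦ ω_q` is surjective onto `ε`-Hermitian forms. -/
theorem stmt5 {F E : Type*} [Field F] [AddCommGroup E] [Module F E]
    (σ : F →+* F) (hσ : ∀ a : F, σ (σ a) = a)
    (ε : F) (hε : ε * σ ε = 1)
    (hexc : ¬ (σ = RingHom.id F ∧ ringChar F = 2))
    (ω : E → E → F) (hωs : IsSesq σ ω)
    (hherm : ∀ v w : E, ω v w = ε * σ (ω w v)) :
    ∃ q : E → E → F, IsSesq σ q ∧ ∀ v w : E, q v w + ε * σ (q w v) = ω v w := by
  obtain ⟨c, hc⟩ : ∃ c : F, c + σ c = 1 := by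
    by_cases h : σ = RingHom.id F
    · have h2 : ringChar F ≠ 2 := fun h' => hexc ⟨h, h'⟩
      have h20 : (2 : F) ≠ 0 := Ring.two_ne_zero h2
      refine ⟨2⁻¹, ?_⟩
      rw [h]
      simp only [RingHom.id_apply]
      field_simp
      ring
    · obtain ⟨a, ha⟩ : ∃ a : F, σ a ≠ a := by
        by_contra hall
        push_neg at hall
        exact h (RingHom.ext hall)
      have hd : a - σ a ≠ 0 := fun h0 => ha (by linear_combination -h0)
      refine ⟨a / (a - σ a), ?_⟩
      rw [map_div₀, map_sub, hσ]
      have hd' : σ a - a ≠ 0 := fun h0 => hd (by linear_combination -h0)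
      field_simp
      ring
  obtain ⟨h1, h2, h3⟩ := hωs
  refine ⟨fun v w => c * ω v w, ⟨?_, ?_, ?_⟩, ?_⟩
  · intro v v' w; simp only [h1]; ring
  · intro v w w'; simp only [h2]; ring
  · intro a b v w; simp only [h3]; ring
  · intro v w
    have : c * ω v w + ε * σ (c * ω w v) = (c + σ c) * ω v w := by
      rw [map_mul, hherm v w]; ring
    rw [this, hc, one_mul]
end

section
/- Let F be any field and E an F-vector space. For every quadratic form Q : E → F (i.e. Q(a·v) = a²·Q(v) for all a ∈ F, v ∈ E, and B_Q(v,w) = Q(v+w) − Q(v) − Q(w) is bilinear), there exists a bilinear form q on E with q(v,v) = Q(v) for all v ∈ E, and moreover q(v,w) + q(w,v) = B_Q(v,w) for all v,w ∈ E. -/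
/-- For every quadratic form `Q : E → F` (i.e. `Q(a•v) = a²·Q(v)` and
`B_Q(v,w) = Q(v+w) − Q(v) − Q(w)` is bilinear), there exists a bilinear form `q` on `E`
with `q(v,v) = Q(v)` for all `v`, and `q(v,w) + q(w,v) = B_Q(v,w)` for all `v,w`. -/
theorem stmt7 {F E : Type*} [Field F] [AddCommGroup E] [Module F E]
    (Q : E → F)
    (hQsmul : ∀ (a : F) (v : E), Q (a • v) = a ^ 2 * Q v)
    (hQbil : IsSesq (RingHom.id F) (fun v w => Q (v + w) - Q v - Q w)) :
    ∃ q : E → E → F, IsSesq (RingHom.id F) q ∧ (∀ v : E, q v v = Q v) ∧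
      ∀ v w : E, q v w + q w v = Q (v + w) - Q v - Q w := by
  obtain ⟨hadd, hadd', hsmul⟩ := hQbil
  -- build the companion bilinear map
  set B : E → E → F := fun v w => Q (v + w) - Q v - Q w with hB
  have hsml : ∀ (a : F) (v w : E), B (a • v) w = a * B v w := by
    intro a v w
    have := hsmul a 1 v w
    simpa using this
  have hsmr : ∀ (a : F) (v w : E), B v (a • w) = a * B v w := by
    intro a v w
    have := hsmul 1 a v w
    simpa [mul_comm] using this
  let Bl : LinearMap.BilinMap F E F :=
    LinearMap.mk₂ F B hadd hsml hadd' hsmr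
  let Q' : QuadraticForm F E :=
    { toFun := Q
      toFun_smul := fun a x => by simpa [pow_two, smul_eq_mul] using hQsmul a x
      exists_companion' := ⟨Bl, fun x y => by simp [Bl, B]⟩ }
  obtain ⟨q, hq⟩ := LinearMap.BilinMap.toQuadraticMap_surjective Q'
  have hdiag : ∀ v : E, q v v = Q v := fun v =>
    congrFun (congrArg DFunLike.coe hq) v
  refine ⟨fun v w => q v w, ⟨?_, ?_, ?_⟩, hdiag, ?_⟩
  · intro v v' w; simp [LinearMap.add_apply, map_add]
  · intro v w w'; simp [map_add]
  · intro a b v w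
    simp [LinearMap.map_smul₂, map_smul, smul_eq_mul]; ring
  · intro v w
    have h := hdiag (v + w)
    have : q (v + w) (v + w) = q v v + q v w + (q w v + q w w) := by
      simp [map_add, LinearMap.add_apply]; ring
    rw [this, hdiag v, hdiag w] at h
    linear_combination h
end

section
/- Suppose σ ≠ id. Then there exists a nonzero a ∈ F with ε = a⁻¹·σ(a); and for any such a, a sesquilinear form f on E lies in X(E,σ,ε,Λ) if and only if the sesquilinear form a·f lies in X(E,σ,1,a·Λ), where a·Λ = {a·λ : λ ∈ Λ}. Hence multiplication by a induces an isomorphism Sesq_σ(E)/X(E,σ,ε,Λ) ≅ Sesq_σ(E)/X(E,σ,1,a·Λ). -/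
/-- Membership in `X(E,σ,ε,Λ)`: `f(v,v) ∈ Λ` and `f(w,v) = −ε·σ(f(v,w))` for all `v,w`. -/
def InX {F E : Type*} [Field F] [AddCommGroup E] [Module F E]
    (σ : F →+* F) (ε : F) (Λ : Set F) (f : E → E → F) : Prop :=
  (∀ v : E, f v v ∈ Λ) ∧ ∀ v w : E, f w v = -(ε * σ (f v w))

/-- If `σ ≠ id`, there is a nonzero `a ∈ F` with `ε = a⁻¹·σ(a)`; and for any such `a`,
a sesquilinear form `f` lies in `X(E,σ,ε,Λ)` iff `a·f` lies in `X(E,σ,1,a·Λ)`. Hence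
multiplication by `a` induces an isomorphism `Sesq/X(E,σ,ε,Λ) ≅ Sesq/X(E,σ,1,aΛ)`. -/
theorem stmt8 {F E : Type*} [Field F] [AddCommGroup E] [Module F E]
    (σ : F →+* F) (hσ : ∀ a : F, σ (σ a) = a)
    (hσne : σ ≠ RingHom.id F)
    (ε : F) (hε : ε * σ ε = 1)
    (Λ : AddSubgroup F)
    (hmin : ∀ a : F, a - ε * σ a ∈ Λ)
    (hmax : ∀ a ∈ Λ, a + ε * σ a = 0) :
    (∃ a : F, a ≠ 0 ∧ ε = a⁻¹ * σ a) ∧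
    ∀ a : F, a ≠ 0 → ε = a⁻¹ * σ a →
      ∀ f : E → E → F, IsSesq σ f →
        (InX σ ε (Λ : Set F) f ↔
          InX σ 1 ((fun x => a * x) '' (Λ : Set F)) (fun v w => a * f v w)) := by
  constructor
  · -- existence
    have hεne : ε ≠ 0 := by
      intro h; rw [h] at hε; simp at hε
    have hσε : σ ε = ε⁻¹ := by
      field_simp
      linear_combination hε
    have hc : ∃ c : F, σ c + ε * c ≠ 0 := by
      by_contra h
      push_neg at h
      have h1 : σ (1:F) + ε * 1 = 0 := h 1
      simp at h1
      have hεm : ε = -1 := by linear_combination h1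
      apply hσne
      ext x
      have hx := h x
      rw [hεm] at hx
      simp at hx ⊢
      linear_combination hx
    obtain ⟨c, hc⟩ := hc
    set b := σ c + ε * c with hbdef
    have hbσ : σ b = ε⁻¹ * b := by
      rw [hbdef, map_add, map_mul, hσ, hσε]
      field_simp
      ring
    have hbne : σ b ≠ 0 := by
      rw [hbσ]
      exact mul_ne_zero (inv_ne_zero hεne) hc
    refine ⟨σ b, hbne, ?_⟩
    rw [hσ, hbσ]
    field_simp
  · intro a ha hεa f _hf
    have hσa : σ a = a * ε := by
      rw [hεa]; field_simp
    constructor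
    · rintro ⟨h1, h2⟩
      constructor
      · intro v; exact ⟨f v v, h1 v, rfl⟩
      · intro v w
        show a * f w v = -(1 * σ (a * f v w))
        rw [h2 v w, map_mul, hσa]
        ring
    · rintro ⟨h1, h2⟩
      constructor
      · intro v
        obtain ⟨l, hl, hle⟩ := h1 v
        have : l = f v v := mul_left_cancel₀ ha hle
        rwa [this] at hl
      · intro v w
        have h3 : a * f w v = -(1 * σ (a * f v w)) := h2 v w
        rw [map_mul, hσa] at h3
        have ha' : a * f w v = a * (-(ε * σ (f v w))) := by
          rw [h3]; ring
        exact mul_left_cancel₀ ha ha'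
end

section
/- Let (E,q) be a formed space and let U, W be isotropic subspaces of E with dim U = dim W and dim(U ∩ R(E)) = dim(W ∩ R(E)). Then there exists a bijective isometry g : E → E with g(U) = W; that is, the group of bijective isometries of (E,q) acts transitively on isotropic subspaces with given dimension and given dimension of intersection with the radical. -/
/-- `ω_q(v,w) = q(v,w) + ε·σ(q(w,v))`. -/
def omegaF {F E : Type*} [Field F] [AddCommGroup E] [Module F E]
    (σ : F →+* F) (ε : F) (q : E → E → F) (v w : E) : F :=
  q v w + ε * σ (q w v)

/-- The radical `R(E) = {v ∈ K(E) : q(v,v) ∈ Λ}` of a formed space (as a set). -/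
def radSet {F E : Type*} [Field F] [AddCommGroup E] [Module F E]
    (σ : F →+* F) (ε : F) (q : E → E → F) (Λ : Set F) : Set E :=
  {v : E | (∀ w : E, omegaF σ ε q w v = 0) ∧ q v v ∈ Λ}

/-- A subspace `U` is isotropic if `ω_q` vanishes on `U` and `q(u,u) ∈ Λ` for `u ∈ U`. -/
def IsIsotropic {F E : Type*} [Field F] [AddCommGroup E] [Module F E]
    (σ : F →+* F) (ε : F) (q : E → E → F) (Λ : Set F) (U : Submodule F E) : Prop :=
  (∀ u ∈ U, ∀ u' ∈ U, omegaF σ ε q u u' = 0) ∧ ∀ u ∈ U, q u u ∈ Λ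

set_option linter.unusedSectionVars false
set_option maxHeartbeats 2000000

namespace Stmt11

structure FormCtx (F : Type*) [Field F] where
  σ : F →+* F
  hσ : ∀ a, σ (σ a) = a
  ε : F
  hε : ε * σ ε = 1
  Λ : AddSubgroup F
  hmin : ∀ a, a - ε * σ a ∈ Λ
  hmax : ∀ a ∈ Λ, a + ε * σ a = 0
  hnorm : ∀ (a t : F), t ∈ Λ → a * σ a * t ∈ Λ

variable {F : Type*} [Field F] {E : Type*} [AddCommGroup E] [Module F E]

abbrev FormCtx.om (C : FormCtx F) (q : E → E → F) (v w : E) : F :=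
  omegaF C.σ C.ε q v w

variable (C : FormCtx F) {q : E → E → F}

theorem eps_ne : C.ε ≠ 0 := fun h => one_ne_zero (α := F) (by rw [← C.hε, h, zero_mul])

theorem sigma_eps : C.σ C.ε = C.ε⁻¹ :=
  eq_inv_of_mul_eq_one_left (by rw [mul_comm]; exact C.hε)

section basic
variable (hq : IsSesq C.σ q)
include hq

theorem q_add_left (v v' w : E) : q (v + v') w = q v w + q v' w := hq.1 v v' w
theorem q_add_right (v w w' : E) : q v (w + w') = q v w + q v w' := hq.2.1 v w w'
theorem q_smul_left (a : F) (v w : E) : q (a • v) w = C.σ a * q v w := by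
  have := hq.2.2 a 1 v w; simpa using this
theorem q_smul_right (b : F) (v w : E) : q v (b • w) = q v w * b := by
  have := hq.2.2 1 b v w; simpa using this
theorem q_zero_left (w : E) : q 0 w = 0 := by
  have := hq.1 0 0 w; simpa using this.symm
theorem q_zero_right (v : E) : q v 0 = 0 := by
  have := hq.2.1 v 0 0; simpa using this.symm

theorem om_add_left (v v' w : E) : C.om q (v + v') w = C.om q v w + C.om q v' w := by
  simp only [FormCtx.om, omegaF, q_add_left C hq, q_add_right C hq, map_add]; ring
theorem om_add_right (v w w' : E) : C.om q v (w + w') = C.om q v w + C.om q v w' := by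
  simp only [FormCtx.om, omegaF, q_add_left C hq, q_add_right C hq, map_add]; ring
theorem om_smul_left (a : F) (v w : E) : C.om q (a • v) w = C.σ a * C.om q v w := by
  simp only [FormCtx.om, omegaF, q_smul_left C hq, q_smul_right C hq, map_mul, C.hσ]; ring
theorem om_smul_right (a : F) (v w : E) : C.om q v (a • w) = a * C.om q v w := by
  simp only [FormCtx.om, omegaF, q_smul_left C hq, q_smul_right C hq, map_mul, C.hσ]; ring
theorem om_zero_left (w : E) : C.om q 0 w = 0 := by
  simp [FormCtx.om, omegaF, q_zero_left C hq, q_zero_right C hq]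
theorem om_zero_right (v : E) : C.om q v 0 = 0 := by
  simp [FormCtx.om, omegaF, q_zero_left C hq, q_zero_right C hq]

theorem om_swap (v w : E) : C.om q w v = C.ε * C.σ (C.om q v w) := by
  simp only [FormCtx.om, omegaF, map_add, map_mul, C.hσ]
  linear_combination (-(q w v)) * C.hε

omit hq in
theorem om_self {v : E} (h : q v v ∈ C.Λ) : C.om q v v = 0 := C.hmax _ h

omit hq in
theorem cross_mem (v w : E) : q v w + q w v - C.om q w v ∈ C.Λ := by
  have h : q v w + q w v - C.om q w v = q v w - C.ε * C.σ (q v w) := by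
    simp only [FormCtx.om, omegaF]; ring
  rw [h]; exact C.hmin _

theorem Qadd_mem (v w : E) :
    q (v + w) (v + w) - (q v v + q w w + C.om q w v) ∈ C.Λ := by
  have h1 : q (v + w) (v + w) = q v v + q v w + q w v + q w w := by
    rw [q_add_left C hq, q_add_right C hq, q_add_right C hq]; ring
  have h2 : q (v + w) (v + w) - (q v v + q w w + C.om q w v)
      = q v w + q w v - C.om q w v := by rw [h1]; ring
  rw [h2]; exact cross_mem C v w

theorem Qsmul (a : F) (v : E) : q (a • v) (a • v) = a * C.σ a * q v v := by
  have := hq.2.2 a a v v; rw [this]; ring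

end basic

def IsIso (C : FormCtx F) (q : E → E → F) (g : E → E) : Prop :=
  (∀ v w : E, C.om q (g v) (g w) = C.om q v w) ∧
  ∀ v : E, q (g v) (g v) - q v v ∈ C.Λ

theorem IsIso.id' : IsIso C q (id : E → E) :=
  ⟨fun _ _ => rfl, fun v => by rw [id_eq, sub_self]; exact C.Λ.zero_mem⟩

theorem IsIso.comp {g h : E → E}
    (hg : IsIso C q g) (hh : IsIso C q h) : IsIso C q (g ∘ h) := by
  refine ⟨fun v w => ?_, fun v => ?_⟩
  · show C.om q (g (h v)) (g (h w)) = C.om q v w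
    rw [hg.1, hh.1]
  · show q (g (h v)) (g (h v)) - q v v ∈ C.Λ
    have e : q (g (h v)) (g (h v)) - q v v
        = (q (g (h v)) (g (h v)) - q (h v) (h v)) + (q (h v) (h v) - q v v) := by ring
    rw [e]; exact C.Λ.add_mem (hg.2 (h v)) (hh.2 v)

theorem IsIso.inv (g : E ≃ₗ[F] E)
    (hg : IsIso C q g) : IsIso C q g.symm := by
  constructor
  · intro v w
    have h := hg.1 (g.symm v) (g.symm w)
    rw [g.apply_symm_apply, g.apply_symm_apply] at h
    exact h.symm
  · intro v
    have h := hg.2 (g.symm v)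
    rw [g.apply_symm_apply] at h
    have := C.Λ.neg_mem h
    simpa using this


set_option linter.dupNamespace false

/-- the linear functional `z ↦ ω(x,z)` -/
def omL (C : FormCtx F) (hq : IsSesq C.σ q) (x : E) : E →ₗ[F] F where
  toFun z := C.om q x z
  map_add' := om_add_right C hq x
  map_smul' a z := by simp [om_smul_right C hq]

@[simp] theorem omL_apply (hq : IsSesq C.σ q) (x z : E) :
    omL C hq x z = C.om q x z := rfl

theorem sigma_ne_zero {a : F} (ha : a ≠ 0) : C.σ a ≠ 0 := fun h => by
  have h2 := congrArg C.σ h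
  rw [C.hσ, map_zero] at h2
  exact ha h2

/-- The "swap" isometry: if `x`, `y` are isotropic vectors with `ω(x,y) ≠ 0`, there
is a bijective isometry sending `x` to `y`. -/
theorem swap_lemma [FiniteDimensional F E] (hq : IsSesq C.σ q) (x y : E)
    (hx : q x x ∈ C.Λ) (hy : q y y ∈ C.Λ) (hc : C.om q x y ≠ 0) :
    ∃ g : E ≃ₗ[F] E, IsIso C q g ∧ g x = y := by
  set c : F := C.om q x y with hcdef
  have hσc : C.σ c ≠ 0 := sigma_ne_zero C hc
  have hεne : C.ε ≠ 0 := eps_ne C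
  set ℓa : E →ₗ[F] F := (C.ε⁻¹ * (C.σ c)⁻¹) • (omL C hq x - omL C hq y) with hℓa
  set ℓb : E →ₗ[F] F := (C.ε⁻¹ * (C.σ c)⁻¹) • omL C hq y - c⁻¹ • omL C hq x with hℓb
  set g₀ : E →ₗ[F] E := LinearMap.id + (LinearMap.smulRight ℓa x)
      + (LinearMap.smulRight ℓb y) with hg₀
  have hxx : C.om q x x = 0 := om_self C hx
  have hyy : C.om q y y = 0 := om_self C hy
  have hyx : C.om q y x = C.ε * C.σ c := om_swap C hq x y
  have happ : ∀ z : E, g₀ z = z + (C.ε⁻¹ * (C.σ c)⁻¹ * (C.om q x z - C.om q y z)) • x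
      + (C.ε⁻¹ * (C.σ c)⁻¹ * C.om q y z - c⁻¹ * C.om q x z) • y := by
    intro z
    simp [hg₀, hℓa, hℓb, LinearMap.smulRight_apply, LinearMap.smul_apply,
      LinearMap.sub_apply, smul_eq_mul, sub_smul, smul_smul]
  -- ω-preservation
  have hom : ∀ z w : E, C.om q (g₀ z) (g₀ w) = C.om q z w := by
    intro z w
    rw [happ z, happ w]
    have hzx : C.om q z x = C.ε * C.σ (C.om q x z) := om_swap C hq x z
    have hzy : C.om q z y = C.ε * C.σ (C.om q y z) := om_swap C hq y z
    simp only [om_add_left C hq, om_add_right C hq, om_smul_left C hq,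
      om_smul_right C hq, hxx, hyy, hyx, hzx, hzy, hcdef.symm]
    simp only [map_mul, map_sub, map_inv₀, C.hσ, sigma_eps C, inv_inv]
    obtain ⟨A2, hA2⟩ : ∃ t, C.σ (C.om q x z) = t := ⟨_, rfl⟩
    obtain ⟨B2, hB2⟩ : ∃ t, C.σ (C.om q y z) = t := ⟨_, rfl⟩
    obtain ⟨Z1, hZ1⟩ : ∃ t, C.om q z w = t := ⟨_, rfl⟩
    obtain ⟨Aw, hAw⟩ : ∃ t, C.om q x w = t := ⟨_, rfl⟩
    obtain ⟨Bw, hBw⟩ : ∃ t, C.om q y w = t := ⟨_, rfl⟩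
    obtain ⟨s1, hs1⟩ : ∃ t, C.σ c = t := ⟨_, rfl⟩
    have hs1' : s1 ≠ 0 := hs1 ▸ hσc
    simp only [hA2, hB2, hZ1, hAw, hBw, hs1]
    clear_value c
    field_simp
    ring_nf
  -- Q-preservation
  have hQ : ∀ z : E, q (g₀ z) (g₀ z) - q z z ∈ C.Λ := by
    intro z
    set a : F := C.ε⁻¹ * (C.σ c)⁻¹ * (C.om q x z - C.om q y z) with ha
    set b : F := C.ε⁻¹ * (C.σ c)⁻¹ * C.om q y z - c⁻¹ * C.om q x z with hb
    have hgz : g₀ z = z + (a • x + b • y) := by rw [happ z]; abel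
    have m1 : q (g₀ z) (g₀ z) - (q z z + q (a•x + b•y) (a•x + b•y)
        + C.om q (a•x + b•y) z) ∈ C.Λ := by
      rw [hgz]; exact Qadd_mem C hq z (a•x + b•y)
    have m2 : q (a•x + b•y) (a•x + b•y) - (q (a•x) (a•x) + q (b•y) (b•y)
        + C.om q (b•y) (a•x)) ∈ C.Λ := Qadd_mem C hq (a•x) (b•y)
    have m3 : q (a•x) (a•x) ∈ C.Λ := by
      rw [Qsmul C hq]; exact C.hnorm a _ hx
    have m4 : q (b•y) (b•y) ∈ C.Λ := by
      rw [Qsmul C hq]; exact C.hnorm b _ hy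
    have m5 : C.om q (b•y) (a•x) + C.om q (a•x + b•y) z
        = (C.ε * C.σ (C.om q x z) * (C.om q x z) * c⁻¹)
          - C.ε * C.σ (C.ε * C.σ (C.om q x z) * (C.om q x z) * c⁻¹) := by
      simp only [om_add_left C hq, om_smul_left C hq, om_smul_right C hq,
        hyx, hxx, hyy, ha, hb]
      simp only [map_mul, map_sub, map_inv₀, C.hσ, sigma_eps C, inv_inv]
      field_simp
      ring
    have m5' : C.om q (b•y) (a•x) + C.om q (a•x + b•y) z ∈ C.Λ := by
      rw [m5]; exact C.hmin _
    have key : q (g₀ z) (g₀ z) - q z z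
        = (q (g₀ z) (g₀ z) - (q z z + q (a•x + b•y) (a•x + b•y)
            + C.om q (a•x + b•y) z))
          + (q (a•x + b•y) (a•x + b•y) - (q (a•x) (a•x) + q (b•y) (b•y)
            + C.om q (b•y) (a•x)))
          + q (a•x) (a•x) + q (b•y) (b•y)
          + (C.om q (b•y) (a•x) + C.om q (a•x + b•y) z) := by ring
    rw [key]
    exact C.Λ.add_mem (C.Λ.add_mem (C.Λ.add_mem (C.Λ.add_mem m1 m2) m3) m4) m5'
  -- g₀ x = y
  have hgx : g₀ x = y := by
    rw [happ x, hxx, hyx]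
    have h1 : C.ε⁻¹ * (C.σ c)⁻¹ * (0 - C.ε * C.σ c) = -1 := by field_simp; ring
    have h2 : C.ε⁻¹ * (C.σ c)⁻¹ * (C.ε * C.σ c) - c⁻¹ * 0 = 1 := by field_simp; ring
    rw [h1, h2, one_smul, neg_one_smul]
    abel
  -- injectivity
  have hinj : Function.Injective g₀ := by
    rw [← LinearMap.ker_eq_bot, LinearMap.ker_eq_bot']
    intro z hz
    have e1 : C.om q x (g₀ z) = 0 := by rw [hz]; exact om_zero_right C hq x
    have e2 : C.om q y (g₀ z) = 0 := by rw [hz]; exact om_zero_right C hq y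
    rw [happ z] at e1 e2
    simp only [om_add_right C hq, om_smul_right C hq, hxx, hyy, hyx,
      hcdef.symm] at e1 e2
    set A : F := C.om q x z with hA
    set B : F := C.om q y z with hB
    have hBz : B = 0 := by
      field_simp at e1
      have h : B * (c * c) = 0 := by linear_combination c * e1
      rcases mul_eq_zero.mp h with h | h
      · exact h
      · exact absurd (mul_eq_zero.mp h) (by simp [hc])
    have hAz : A = 0 := by
      rw [hBz] at e2
      field_simp at e2
      have h3 : (C.ε * C.σ c * c) * A = 0 := by linear_combination e2
      rcases mul_eq_zero.mp h3 with h | h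
      · exact absurd h (mul_ne_zero (mul_ne_zero hεne hσc) hc)
      · exact h
    have hz0 : z = g₀ z := by
      rw [happ z, ← hA, ← hB, hAz, hBz]
      simp
    rw [hz0, hz]
  have hbij : Function.Bijective g₀ :=
    ⟨hinj, (LinearMap.injective_iff_surjective).mp hinj⟩
  exact ⟨LinearEquiv.ofBijective g₀ hbij, ⟨fun v w => hom v w, fun v => hQ v⟩, hgx⟩


theorem om_ne_swap (hq : IsSesq C.σ q) {v w : E} (h : C.om q v w ≠ 0) :
    C.om q w v ≠ 0 := by
  rw [om_swap C hq v w]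
  exact mul_ne_zero (eps_ne C) (sigma_ne_zero C h)

/-- Transitivity on isotropic vectors outside the kernel. -/
theorem vec_transitive [FiniteDimensional F E] (hq : IsSesq C.σ q) (x y : E)
    (hx : q x x ∈ C.Λ) (hy : q y y ∈ C.Λ)
    (hxK : ∃ w, C.om q x w ≠ 0) (hyK : ∃ w, C.om q y w ≠ 0) :
    ∃ g : E ≃ₗ[F] E, IsIso C q g ∧ g x = y := by
  by_cases hc : C.om q x y ≠ 0
  · exact swap_lemma C hq x y hx hy hc
  push_neg at hc
  obtain ⟨w1, hw1⟩ := hxK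
  obtain ⟨w2, hw2⟩ := hyK
  -- find w₀ with ω x w₀ ≠ 0 and ω y w₀ ≠ 0
  obtain ⟨w₀, ha, hb⟩ : ∃ w₀, C.om q x w₀ ≠ 0 ∧ C.om q y w₀ ≠ 0 := by
    by_cases h1 : C.om q y w1 ≠ 0
    · exact ⟨w1, hw1, h1⟩
    by_cases h2 : C.om q x w2 ≠ 0
    · exact ⟨w2, h2, hw2⟩
    push_neg at h1 h2
    refine ⟨w1 + w2, ?_, ?_⟩
    · rw [om_add_right C hq, h2, add_zero]; exact hw1
    · rw [om_add_right C hq, h1, zero_add]; exact hw2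
  set lam : F := C.σ ((C.om q x w₀)⁻¹ * q w₀ w₀) with hlam
  set z : E := w₀ + (-lam) • x with hzdef
  have hyx : C.om q y x = 0 := by
    rw [om_swap C hq x y, hc, map_zero, mul_zero]
  have hxz : C.om q x z = C.om q x w₀ := by
    rw [hzdef, om_add_right C hq, om_smul_right C hq, om_self C hx]
    ring
  have hyz : C.om q y z = C.om q y w₀ := by
    rw [hzdef, om_add_right C hq, om_smul_right C hq, hyx]
    ring
  have hQz : q z z ∈ C.Λ := by
    have m1 : q z z - (q w₀ w₀ + q ((-lam)•x) ((-lam)•x)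
        + C.om q ((-lam)•x) w₀) ∈ C.Λ := by
      rw [hzdef]; exact Qadd_mem C hq w₀ ((-lam)•x)
    have m2 : q ((-lam)•x) ((-lam)•x) ∈ C.Λ := by
      rw [Qsmul C hq]; exact C.hnorm _ _ hx
    have m3 : q w₀ w₀ + C.om q ((-lam)•x) w₀ = 0 := by
      rw [om_smul_left C hq, hlam, map_neg, C.hσ]
      field_simp
      ring
    have key : q z z = (q z z - (q w₀ w₀ + q ((-lam)•x) ((-lam)•x)
        + C.om q ((-lam)•x) w₀)) + q ((-lam)•x) ((-lam)•x)
        + (q w₀ w₀ + C.om q ((-lam)•x) w₀) := by ring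
    rw [key, m3, add_zero]
    exact C.Λ.add_mem m1 m2
  have hxz' : C.om q x z ≠ 0 := by rw [hxz]; exact ha
  have hzy : C.om q z y ≠ 0 := by
    apply om_ne_swap C hq
    rw [hyz]; exact hb
  obtain ⟨g1, hg1, hg1x⟩ := swap_lemma C hq x z hx hQz hxz'
  obtain ⟨g2, hg2, hg2z⟩ := swap_lemma C hq z y hQz hy hzy
  refine ⟨g1.trans g2, ?_, ?_⟩
  · have : IsIso C q (⇑g2 ∘ ⇑g1) := IsIso.comp C hg2 hg1
    exact ⟨fun v w => this.1 v w, fun v => this.2 v⟩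
  · show g2 (g1 x) = y
    rw [hg1x, hg2z]

open Submodule Module

theorem exists_compl_le {A B : Submodule F E} (h : A ≤ B) :
    ∃ Cm : Submodule F E, Cm ≤ B ∧ A ⊓ Cm = ⊥ ∧ A ⊔ Cm = B := by
  obtain ⟨T, hT⟩ := Submodule.exists_isCompl (Submodule.comap B.subtype A)
  have hmapA : Submodule.map B.subtype (Submodule.comap B.subtype A) = A := by
    rw [Submodule.map_comap_subtype, inf_eq_right.mpr h]
  refine ⟨T.map B.subtype, Submodule.map_subtype_le B T, ?_, ?_⟩
  · rw [← hmapA, ← Submodule.map_inf _ (Submodule.injective_subtype B),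
      hT.inf_eq_bot, Submodule.map_bot]
  · rw [← hmapA, ← Submodule.map_sup, hT.sup_eq_top, Submodule.map_subtype_top]

theorem exists_equiv_map_eq {V : Type*} [AddCommGroup V] [Module F V]
    [FiniteDimensional F V] (A B : Submodule F V)
    (h : finrank F A = finrank F B) :
    ∃ e : V ≃ₗ[F] V, A.map (e : V →ₗ[F] V) = B := by
  obtain ⟨A', hA'⟩ := A.exists_isCompl
  obtain ⟨B', hB'⟩ := B.exists_isCompl
  have hrk : finrank F A' = finrank F B' := by
    have h1 := Submodule.finrank_add_eq_of_isCompl hA'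
    have h2 := Submodule.finrank_add_eq_of_isCompl hB'
    omega
  let e1 : A ≃ₗ[F] B := LinearEquiv.ofFinrankEq _ _ h
  let e2 : A' ≃ₗ[F] B' := LinearEquiv.ofFinrankEq _ _ hrk
  set e : V ≃ₗ[F] V := (Submodule.prodEquivOfIsCompl A A' hA').symm.trans
    ((e1.prodCongr e2).trans (Submodule.prodEquivOfIsCompl B B' hB')) with he
  have key : ∀ x : A, e ↑x = ↑(e1 x) := by
    intro x
    simp only [he, LinearEquiv.trans_apply,
      Submodule.prodEquivOfIsCompl_symm_apply_left, LinearEquiv.prodCongr_apply,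
      Submodule.coe_prodEquivOfIsCompl', map_zero]
    simp
  refine ⟨e, le_antisymm ?_ ?_⟩
  · rintro _ ⟨a, ha, rfl⟩
    have := key ⟨a, ha⟩
    simp only [LinearEquiv.coe_coe]
    rw [this]
    exact (e1 ⟨a, ha⟩).2
  · intro b hb
    refine ⟨↑(e1.symm ⟨b, hb⟩), (e1.symm ⟨b, hb⟩).2, ?_⟩
    rw [LinearEquiv.coe_coe, key (e1.symm ⟨b, hb⟩), e1.apply_symm_apply]

theorem exists_extend_pair {R S : Submodule F E} (hRS : IsCompl R S)
    (h : ↥R ≃ₗ[F] ↥R) :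
    ∃ g : E ≃ₗ[F] E, (∀ v, g v - v ∈ R) ∧ (∀ s ∈ S, g s = s) ∧
      (∀ r : R, g ↑r = ↑(h r)) := by
  set g : E ≃ₗ[F] E := (Submodule.prodEquivOfIsCompl R S hRS).symm.trans
    ((h.prodCongr (LinearEquiv.refl F S)).trans
      (Submodule.prodEquivOfIsCompl R S hRS)) with hg
  have key1 : ∀ r : R, g ↑r = ↑(h r) := by
    intro r
    simp only [hg, LinearEquiv.trans_apply,
      Submodule.prodEquivOfIsCompl_symm_apply_left, LinearEquiv.prodCongr_apply,
      Submodule.coe_prodEquivOfIsCompl', map_zero]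
    simp
  have key2 : ∀ s : S, g ↑s = ↑s := by
    intro s
    simp only [hg, LinearEquiv.trans_apply,
      Submodule.prodEquivOfIsCompl_symm_apply_right, LinearEquiv.prodCongr_apply,
      Submodule.coe_prodEquivOfIsCompl', map_zero]
    simp [LinearEquiv.refl_apply]
  refine ⟨g, ?_, fun s hs => key2 ⟨s, hs⟩, key1⟩
  intro v
  set p := (Submodule.prodEquivOfIsCompl R S hRS).symm v with hp
  have hv : (↑p.1 : E) + ↑p.2 = v := by
    rw [hp, ← Submodule.coe_prodEquivOfIsCompl' R S hRS,
      LinearEquiv.apply_symm_apply]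
  have : g v = ↑(h p.1) + ↑p.2 := by
    rw [← hv, map_add]
    rw [key1 p.1, key2 p.2]
  rw [this, ← hv]
  have : (↑(h p.1) : E) + ↑p.2 - (↑p.1 + ↑p.2) = ↑(h p.1) - ↑p.1 := by abel
  rw [this]
  exact R.sub_mem (h p.1).2 p.1.2

/-- a map congruent to the identity modulo the radical is an isometry -/
theorem rad_iso (hq : IsSesq C.σ q) {R : Submodule F E}
    (hR : (R : Set E) = radSet C.σ C.ε q (C.Λ : Set F))
    (g : E → E) (hgl : ∀ v, g v - v ∈ R) : IsIso C q g := by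
  have hrad : ∀ n ∈ R, (∀ w, C.om q w n = 0) ∧ q n n ∈ C.Λ := by
    intro n hn
    have : n ∈ radSet C.σ C.ε q (C.Λ : Set F) := by rw [← hR]; exact hn
    exact ⟨this.1, this.2⟩
  have hom0 : ∀ (v : E) (n : E), n ∈ R → C.om q n v = 0 := by
    intro v n hn
    rw [om_swap C hq v n, (hrad n hn).1 v, map_zero, mul_zero]
  constructor
  · intro v w
    have hv : g v = v + (g v - v) := by abel
    have hw : g w = w + (g w - w) := by abel
    rw [hv, hw, om_add_left C hq, om_add_right C hq, om_add_right C hq,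
      (hrad _ (hgl w)).1 v, (hrad _ (hgl w)).1 (g v - v),
      hom0 w _ (hgl v)]
    ring
  · intro v
    set n := g v - v with hn
    have hv : g v = v + n := by rw [hn]; abel
    have m1 : q (g v) (g v) - (q v v + q n n + C.om q n v) ∈ C.Λ := by
      rw [hv]; exact Qadd_mem C hq v n
    have m2 : q n n ∈ C.Λ := (hrad n (hgl v)).2
    have key : q (g v) (g v) - q v v
        = (q (g v) (g v) - (q v v + q n n + C.om q n v)) + q n n
          + C.om q n v := by ring
    rw [key]
    exact C.Λ.add_mem (C.Λ.add_mem m1 m2)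
      (by rw [hom0 v n (hgl v)]; exact C.Λ.zero_mem)

section moreOm
variable (hq : IsSesq C.σ q)
include hq

theorem om_neg_left (v w : E) : C.om q (-v) w = -C.om q v w := by
  rw [show -v = (-1 : F) • v by simp, om_smul_left C hq]
  simp

theorem om_neg_right (v w : E) : C.om q v (-w) = -C.om q v w := by
  rw [show -w = (-1 : F) • w by simp, om_smul_right C hq]
  simp

theorem om_sub_left (v v' w : E) : C.om q (v - v') w = C.om q v w - C.om q v' w := by
  rw [sub_eq_add_neg, om_add_left C hq, om_neg_left C hq]
  ring

theorem om_sub_right (v w w' : E) : C.om q v (w - w') = C.om q v w - C.om q v w' := by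
  rw [sub_eq_add_neg, om_add_right C hq, om_neg_right C hq]
  ring

theorem om_ne_swap' {v w : E} (h : C.om q v w = 0) : C.om q w v = 0 := by
  rw [om_swap C hq v w, h, map_zero, mul_zero]

theorem map_isotropic (g : E ≃ₗ[F] E) (hg : IsIso C q ⇑g)
    {U : Submodule F E} (hU : IsIsotropic C.σ C.ε q (C.Λ : Set F) U) :
    IsIsotropic C.σ C.ε q (C.Λ : Set F) (U.map (g : E →ₗ[F] E)) := by
  constructor
  · rintro _ ⟨u, hu, rfl⟩ _ ⟨u', hu', rfl⟩
    show C.om q (g u) (g u') = 0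
    rw [hg.1]
    exact hU.1 u hu u' hu'
  · rintro _ ⟨u, hu, rfl⟩
    have h1 := hg.2 u
    have h2 := hU.2 u hu
    have h3 : q (g u) (g u) = (q (g u) (g u) - q u u) + q u u := by ring
    rw [LinearEquiv.coe_coe, h3]
    exact C.Λ.add_mem h1 h2

theorem map_kertriv (g : E ≃ₗ[F] E) (hg : IsIso C q ⇑g)
    {U : Submodule F E} (hUK : ∀ v ∈ U, (∀ w, C.om q w v = 0) → v = 0) :
    ∀ v ∈ U.map (g : E →ₗ[F] E), (∀ w, C.om q w v = 0) → v = 0 := by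
  rintro _ ⟨u, hu, rfl⟩ hall
  have h0 : ∀ w, C.om q w u = 0 := by
    intro w
    have h1 := hall (g w)
    rw [LinearEquiv.coe_coe] at h1
    rwa [hg.1 w u] at h1
  rw [LinearEquiv.coe_coe, hUK u hu h0, map_zero]

end moreOm

universe v

set_option maxHeartbeats 4000000 in
theorem coreT (C : FormCtx F) (d : ℕ) :
    ∀ {M : Type v} [AddCommGroup M] [Module F M] [FiniteDimensional F M]
      (q : M → M → F), IsSesq C.σ q → ∀ (U W : Submodule F M),
      IsIsotropic C.σ C.ε q (C.Λ : Set F) U →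
      IsIsotropic C.σ C.ε q (C.Λ : Set F) W →
      (∀ v ∈ U, (∀ w, C.om q w v = 0) → v = 0) →
      (∀ v ∈ W, (∀ w, C.om q w v = 0) → v = 0) →
      finrank F U = d → finrank F W = d →
      ∃ g : M ≃ₗ[F] M, IsIso C q ⇑g ∧ U.map (g : M →ₗ[F] M) = W := by
  induction d with
  | zero =>
    intro M _ _ _ q hq U W hU hW hUK hWK hdU hdW
    have hU0 : U = ⊥ := Submodule.finrank_eq_zero.mp hdU
    have hW0 : W = ⊥ := Submodule.finrank_eq_zero.mp hdW
    refine ⟨LinearEquiv.refl F M, IsIso.id' C, ?_⟩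
    rw [hU0, hW0, Submodule.map_bot]
  | succ d ih =>
    intro M _ _ _ q hq U W hU hW hUK hWK hdU hdW
    obtain ⟨u, hu, hu0⟩ := Submodule.exists_mem_ne_zero_of_ne_bot
      (p := U) (by intro h; rw [h, finrank_bot] at hdU; omega)
    obtain ⟨e, heW, he0⟩ := Submodule.exists_mem_ne_zero_of_ne_bot
      (p := W) (by intro h; rw [h, finrank_bot] at hdW; omega)
    have hQu : q u u ∈ C.Λ := hU.2 u hu
    have hQe : q e e ∈ C.Λ := hW.2 e heW
    have huex : ∃ w, C.om q u w ≠ 0 := by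
      by_contra hcon
      push_neg at hcon
      exact hu0 (hUK u hu (fun w => om_ne_swap' C hq (hcon w)))
    have heex : ∃ w, C.om q e w ≠ 0 := by
      by_contra hcon
      push_neg at hcon
      exact he0 (hWK e heW (fun w => om_ne_swap' C hq (hcon w)))
    obtain ⟨h1, hh1, hh1u⟩ := vec_transitive C hq u e hQu hQe huex heex
    set U' : Submodule F M := U.map (h1 : M →ₗ[F] M) with hU'def
    have hU' : IsIsotropic C.σ C.ε q (C.Λ : Set F) U' := map_isotropic C hq h1 hh1 hU
    have hU'K : ∀ v ∈ U', (∀ w, C.om q w v = 0) → v = 0 := map_kertriv C hq h1 hh1 hUK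
    have hdU' : finrank F U' = d + 1 := by
      rw [hU'def, LinearEquiv.finrank_map_eq]; exact hdU
    have heU' : e ∈ U' := ⟨u, hu, hh1u⟩
    -- hyperbolic partner f of e
    obtain ⟨w0, hw0⟩ := heex
    have hee : C.om q e e = 0 := om_self C hQe
    obtain ⟨v1, hev1⟩ : ∃ v1 : M, C.om q e v1 = 1 :=
      ⟨(C.om q e w0)⁻¹ • w0, by rw [om_smul_right C hq, inv_mul_cancel₀ hw0]⟩
    obtain ⟨f, hef, hQf⟩ : ∃ f : M, C.om q e f = 1 ∧ q f f ∈ C.Λ := by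
      refine ⟨v1 + (-(C.σ (q v1 v1))) • e, ?_, ?_⟩
      · rw [om_add_right C hq, hev1, om_smul_right C hq, hee]
        ring
      · have m1 : q (v1 + (-(C.σ (q v1 v1)))•e) (v1 + (-(C.σ (q v1 v1)))•e)
            - (q v1 v1 + q ((-(C.σ (q v1 v1)))•e) ((-(C.σ (q v1 v1)))•e)
            + C.om q ((-(C.σ (q v1 v1)))•e) v1) ∈ C.Λ := Qadd_mem C hq v1 _
        have m2 : q ((-(C.σ (q v1 v1)))•e) ((-(C.σ (q v1 v1)))•e) ∈ C.Λ := by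
          rw [Qsmul C hq]; exact C.hnorm _ _ hQe
        have m3 : q v1 v1 + C.om q ((-(C.σ (q v1 v1)))•e) v1 = 0 := by
          rw [om_smul_left C hq, map_neg, C.hσ, hev1]
          ring
        have key : q (v1 + (-(C.σ (q v1 v1)))•e) (v1 + (-(C.σ (q v1 v1)))•e)
            = (q (v1 + (-(C.σ (q v1 v1)))•e) (v1 + (-(C.σ (q v1 v1)))•e)
              - (q v1 v1 + q ((-(C.σ (q v1 v1)))•e) ((-(C.σ (q v1 v1)))•e)
              + C.om q ((-(C.σ (q v1 v1)))•e) v1))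
              + q ((-(C.σ (q v1 v1)))•e) ((-(C.σ (q v1 v1)))•e)
              + (q v1 v1 + C.om q ((-(C.σ (q v1 v1)))•e) v1) := by ring
        rw [key, m3, add_zero]
        exact C.Λ.add_mem m1 m2
    have hff : C.om q f f = 0 := om_self C hQf
    have hfe : C.om q f e = C.ε := by
      rw [om_swap C hq e f, hef, map_one, mul_one]
    -- the subspace P
    set P : Submodule F M := LinearMap.ker (omL C hq e) ⊓ LinearMap.ker (omL C hq f)
      with hPdef
    have memP : ∀ z : M, z ∈ P ↔ C.om q e z = 0 ∧ C.om q f z = 0 := by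
      intro z
      simp [hPdef, LinearMap.mem_ker]
    have hPe : ∀ p : M, p ∈ P → C.om q p e = 0 := fun p hp =>
      om_ne_swap' C hq ((memP p).mp hp).1
    have hPf : ∀ p : M, p ∈ P → C.om q p f = 0 := fun p hp =>
      om_ne_swap' C hq ((memP p).mp hp).2
    -- projection π
    have hεne : C.ε ≠ 0 := eps_ne C
    set π : M →ₗ[F] M := LinearMap.id
      - ((C.σ C.ε) • (omL C hq f)).smulRight e - (omL C hq e).smulRight f with hπ
    have hπapp : ∀ z : M, π z = z - (C.σ C.ε * C.om q f z) • e - (C.om q e z) • f := by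
      intro z
      simp [hπ, LinearMap.smulRight_apply, LinearMap.smul_apply, smul_eq_mul]
    have hπP : ∀ z : M, π z ∈ P := by
      intro z
      rw [memP, hπapp]
      constructor
      · rw [om_sub_right C hq, om_sub_right C hq, om_smul_right C hq,
          om_smul_right C hq, hee, hef]
        ring
      · rw [om_sub_right C hq, om_sub_right C hq, om_smul_right C hq,
          om_smul_right C hq, hfe, hff, sigma_eps C]
        field_simp
        ring
    have hdec : ∀ z : M, z = π z + (C.σ C.ε * C.om q f z) • e + (C.om q e z) • f := by
      intro z
      rw [hπapp]
      abel
    have hπe : π e = 0 := by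
      rw [hπapp e, hee, hfe, sigma_eps C, inv_mul_cancel₀ (eps_ne C)]
      simp
    -- complements of span{e}
    obtain ⟨U₂, hU₂le, hU₂inf, hU₂sup⟩ := exists_compl_le
      (A := Submodule.span F {e}) (B := U')
      (by rw [Submodule.span_le]; exact Set.singleton_subset_iff.mpr heU')
    obtain ⟨W₂, hW₂le, hW₂inf, hW₂sup⟩ := exists_compl_le
      (A := Submodule.span F {e}) (B := W)
      (by rw [Submodule.span_le]; exact Set.singleton_subset_iff.mpr heW)
    have hdU₂ : finrank F U₂ = d := by
      have h := Submodule.finrank_sup_add_finrank_inf_eq (Submodule.span F {e}) U₂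
      rw [hU₂sup, hU₂inf, hdU', finrank_bot, finrank_span_singleton he0] at h
      omega
    have hdW₂ : finrank F W₂ = d := by
      have h := Submodule.finrank_sup_add_finrank_inf_eq (Submodule.span F {e}) W₂
      rw [hW₂sup, hW₂inf, hdW, finrank_bot, finrank_span_singleton he0] at h
      omega
    -- generic facts about π on an isotropic X containing e
    have hπX : ∀ (X : Submodule F M), IsIsotropic C.σ C.ε q (C.Λ : Set F) X → e ∈ X →
        ∀ x ∈ X, π x = x - (C.σ C.ε * C.om q f x) • e := by
      intro X hX heX x hx
      have hX1 : ∀ a ∈ X, ∀ b ∈ X, C.om q a b = 0 := hX.1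
      rw [hπapp, hX1 e heX x hx, zero_smul, sub_zero]
    have hisoX : ∀ (X : Submodule F M), IsIsotropic C.σ C.ε q (C.Λ : Set F) X → e ∈ X →
        (∀ x ∈ X, ∀ y ∈ X, C.om q (π x) (π y) = 0) ∧ (∀ x ∈ X, q (π x) (π x) ∈ C.Λ) := by
      intro X hX heX
      have hX1 : ∀ a ∈ X, ∀ b ∈ X, C.om q a b = 0 := hX.1
      constructor
      · intro x hx y hy
        rw [hπX X hX heX x hx, hπX X hX heX y hy]
        simp only [om_sub_left C hq, om_sub_right C hq, om_smul_left C hq,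
          om_smul_right C hq]
        rw [hX1 x hx y hy, hX1 x hx e heX, hX1 e heX y hy, hee]
        ring
      · intro x hx
        set cx : F := C.σ C.ε * C.om q f x with hcx
        have hπx : π x = x + (-cx) • e := by
          rw [hπX X hX heX x hx, sub_eq_add_neg, neg_smul]
        have m1 : q (π x) (π x) - (q x x + q ((-cx)•e) ((-cx)•e)
            + C.om q ((-cx)•e) x) ∈ C.Λ := by
          rw [hπx]; exact Qadd_mem C hq x _
        have m2 : q ((-cx)•e) ((-cx)•e) ∈ C.Λ := by
          rw [Qsmul C hq]; exact C.hnorm _ _ hQe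
        have m3 : C.om q ((-cx)•e) x = 0 := by
          rw [om_smul_left C hq, hX1 e heX x hx, mul_zero]
        have key : q (π x) (π x) = (q (π x) (π x) - (q x x + q ((-cx)•e) ((-cx)•e)
            + C.om q ((-cx)•e) x)) + q x x + q ((-cx)•e) ((-cx)•e)
            + C.om q ((-cx)•e) x := by ring
        rw [key]
        refine C.Λ.add_mem (C.Λ.add_mem (C.Λ.add_mem m1 (hX.2 x hx)) m2) ?_
        rw [m3]
        exact C.Λ.zero_mem
    -- images under π
    set Ut : Submodule F M := U₂.map π with hUt
    set Wt : Submodule F M := W₂.map π with hWt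
    have hUtP : Ut ≤ P := by rintro _ ⟨x, hx, rfl⟩; exact hπP x
    have hWtP : Wt ≤ P := by rintro _ ⟨x, hx, rfl⟩; exact hπP x
    have hWtW : Wt ≤ W := by
      rintro _ ⟨y, hy, rfl⟩
      rw [hπX W hW heW y (hW₂le hy)]
      exact W.sub_mem (hW₂le hy) (W.smul_mem _ heW)
    -- finranks of images
    have hrk : ∀ (X X₂ : Submodule F M), X₂ ≤ X →
        Submodule.span F {e} ⊓ X₂ = ⊥ →
        IsIsotropic C.σ C.ε q (C.Λ : Set F) X → e ∈ X →
        finrank F (X₂.map π) = finrank F X₂ := by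
      intro X X₂ hle hinf hX heX
      have hinj : Function.Injective (π.comp X₂.subtype) := by
        rw [← LinearMap.ker_eq_bot, LinearMap.ker_eq_bot']
        intro ⟨x, hx⟩ hzero
        have hπx : π x = 0 := hzero
        rw [hπX X hX heX x (hle hx)] at hπx
        have hxmem : x = (C.σ C.ε * C.om q f x) • e := by
          have := sub_eq_zero.mp hπx
          exact this
        have : x ∈ Submodule.span F {e} ⊓ X₂ := by
          constructor
          · rw [hxmem]
            exact Submodule.smul_mem _ _ (Submodule.mem_span_singleton_self e)
          · exact hx
        rw [hinf] at this
        exact Subtype.ext this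
      have h2 := LinearMap.finrank_range_of_inj hinj
      rwa [LinearMap.range_comp, Submodule.range_subtype] at h2
    have hrkU : finrank F Ut = d := by
      rw [hUt, hrk U' U₂ hU₂le hU₂inf hU' heU', hdU₂]
    have hrkW : finrank F Wt = d := by
      rw [hWt, hrk W W₂ hW₂le hW₂inf hW heW, hdW₂]
    -- kernel triviality of images relative to P
    have hkerX : ∀ (X X₂ : Submodule F M), X₂ ≤ X →
        IsIsotropic C.σ C.ε q (C.Λ : Set F) X → e ∈ X →
        (∀ v ∈ X, (∀ w, C.om q w v = 0) → v = 0) →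
        ∀ x ∈ X₂, (∀ p ∈ P, C.om q p (π x) = 0) → π x = 0 := by
      intro X X₂ hle hX heX hXK x hx hall
      have h1 : ∀ w : M, C.om q w (π x) = 0 := by
        intro w
        have hd := hdec w
        have hPx := (memP (π x)).mp (hπP x)
        calc C.om q w (π x)
            = C.om q (π w + (C.σ C.ε * C.om q f w) • e + (C.om q e w) • f) (π x) := by
              rw [← hd]
          _ = 0 := by
              rw [om_add_left C hq, om_add_left C hq, om_smul_left C hq,
                om_smul_left C hq, hall (π w) (hπP w), hPx.1, hPx.2]
              ring
      have hπxX : π x ∈ X := by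
        rw [hπX X hX heX x (hle hx)]
        exact X.sub_mem (hle hx) (X.smul_mem _ heX)
      exact hXK _ hπxX h1
    -- the formed space on P
    set qP : ↥P → ↥P → F := fun a b => q ↑a ↑b with hqPdef
    have hqP : IsSesq C.σ qP := by
      refine ⟨fun a b c => ?_, fun a b c => ?_, fun a b v w => ?_⟩
      · show q ↑(a + b) ↑c = q ↑a ↑c + q ↑b ↑c
        rw [Submodule.coe_add]; exact hq.1 _ _ _
      · show q ↑a ↑(b + c) = q ↑a ↑b + q ↑a ↑c
        rw [Submodule.coe_add]; exact hq.2.1 _ _ _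
      · show q ↑(a • v) ↑(b • w) = C.σ a * q ↑v ↑w * b
        rw [Submodule.coe_smul, Submodule.coe_smul]; exact hq.2.2 _ _ _ _
    have omP : ∀ a b : ↥P, C.om qP a b = C.om q ↑a ↑b := fun a b => rfl
    set Uh : Submodule F ↥P := Submodule.comap P.subtype Ut with hUh
    set Wh : Submodule F ↥P := Submodule.comap P.subtype Wt with hWh
    have memUh : ∀ a : ↥P, a ∈ Uh ↔ (a : M) ∈ Ut := fun a => Iff.rfl
    have memWh : ∀ a : ↥P, a ∈ Wh ↔ (a : M) ∈ Wt := fun a => Iff.rfl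
    have hisoU' := hisoX U' hU' heU'
    have hisoW := hisoX W hW heW
    have hUhiso : IsIsotropic C.σ C.ε qP (C.Λ : Set F) Uh := by
      constructor
      · rintro a ⟨x, hx, hxa⟩ b ⟨y, hy, hyb⟩
        show C.om qP a b = 0
        have h5 : C.om q (π x) (π y) = 0 := hisoU'.1 x (hU₂le hx) y (hU₂le hy)
        rw [hxa, hyb] at h5
        exact h5
      · rintro a ⟨x, hx, hxa⟩
        show qP a a ∈ C.Λ
        have h5 : q (π x) (π x) ∈ C.Λ := hisoU'.2 x (hU₂le hx)
        rw [hxa] at h5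
        exact h5
    have hWhiso : IsIsotropic C.σ C.ε qP (C.Λ : Set F) Wh := by
      constructor
      · rintro a ⟨x, hx, hxa⟩ b ⟨y, hy, hyb⟩
        show C.om qP a b = 0
        have h5 : C.om q (π x) (π y) = 0 := hisoW.1 x (hW₂le hx) y (hW₂le hy)
        rw [hxa, hyb] at h5
        exact h5
      · rintro a ⟨x, hx, hxa⟩
        show qP a a ∈ C.Λ
        have h5 : q (π x) (π x) ∈ C.Λ := hisoW.2 x (hW₂le hx)
        rw [hxa] at h5
        exact h5
    have hUhK : ∀ a ∈ Uh, (∀ w : ↥P, C.om qP w a = 0) → a = 0 := by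
      rintro a ⟨x, hx, hxa⟩ hall
      have h0 : π x = 0 := by
        apply hkerX U' U₂ hU₂le hU' heU' hU'K x hx
        intro p hp
        rw [show π x = P.subtype a from hxa]
        exact hall ⟨p, hp⟩
      apply Subtype.ext
      show P.subtype a = 0
      rw [← hxa, h0]
    have hWhK : ∀ a ∈ Wh, (∀ w : ↥P, C.om qP w a = 0) → a = 0 := by
      rintro a ⟨x, hx, hxa⟩ hall
      have h0 : π x = 0 := by
        apply hkerX W W₂ hW₂le hW heW hWK x hx
        intro p hp
        rw [show π x = P.subtype a from hxa]
        exact hall ⟨p, hp⟩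
      apply Subtype.ext
      show P.subtype a = 0
      rw [← hxa, h0]
    have hrkUh : finrank F Uh = d :=
      ((Submodule.comapSubtypeEquivOfLe hUtP).finrank_eq).trans hrkU
    have hrkWh : finrank F Wh = d :=
      ((Submodule.comapSubtypeEquivOfLe hWtP).finrank_eq).trans hrkW
    obtain ⟨g', hg'iso, hg'map⟩ := ih qP hqP Uh Wh hUhiso hWhiso hUhK hWhK hrkUh hrkWh
    -- extend g' to M
    set πP : M →ₗ[F] ↥P := LinearMap.codRestrict P π hπP with hπPdef
    have hπPcoe : ∀ z : M, ((πP z : ↥P) : M) = π z := fun z => rfl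
    set G₀ : M →ₗ[F] M := P.subtype.comp (g'.toLinearMap.comp πP)
      + (((C.σ C.ε) • (omL C hq f)).smulRight e + (omL C hq e).smulRight f) with hG₀
    have hGapp : ∀ z : M, G₀ z = ↑(g' (πP z)) + ((C.σ C.ε * C.om q f z) • e
        + (C.om q e z) • f) := by
      intro z
      simp [hG₀, LinearMap.smulRight_apply, LinearMap.smul_apply, smul_eq_mul]
    have expand : ∀ (p p' : M), p ∈ P → p' ∈ P → ∀ (l m l' m' : F),
        C.om q (p + (l • e + m • f)) (p' + (l' • e + m' • f))
          = C.om q p p' + (C.σ l * m' + C.σ m * l' * C.ε) := by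
      intro p p' hp hp' l m l' m'
      simp only [om_add_left C hq, om_add_right C hq, om_smul_left C hq,
        om_smul_right C hq]
      rw [((memP p').mp hp').1, ((memP p').mp hp').2, hPe p hp, hPf p hp,
        hee, hef, hfe, hff]
      ring
    have hGom : ∀ z w : M, C.om q (G₀ z) (G₀ w) = C.om q z w := by
      intro z w
      rw [hGapp z, hGapp w,
        expand _ _ (g' (πP z)).2 (g' (πP w)).2 _ _ _ _]
      have h1 : C.om q ↑(g' (πP z)) ↑(g' (πP w)) = C.om q (π z) (π w) := by
        have h2 := hg'iso.1 (πP z) (πP w)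
        rw [omP, omP] at h2
        rw [h2, hπPcoe, hπPcoe]
      rw [h1]
      conv_rhs => rw [hdec z, hdec w]
      rw [show π z + (C.σ C.ε * C.om q f z) • e + (C.om q e z) • f
          = π z + ((C.σ C.ε * C.om q f z) • e + (C.om q e z) • f) by abel,
        show π w + (C.σ C.ε * C.om q f w) • e + (C.om q e w) • f
          = π w + ((C.σ C.ε * C.om q f w) • e + (C.om q e w) • f) by abel,
        expand _ _ (hπP z) (hπP w) _ _ _ _]
    have Qh : ∀ (p : M), p ∈ P → ∀ l m : F,
        q (p + (l • e + m • f)) (p + (l • e + m • f)) - q p p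
          - q (l • e + m • f) (l • e + m • f) ∈ C.Λ := by
      intro p hp l m
      have m1 := Qadd_mem C hq p (l • e + m • f)
      have m2 : C.om q (l • e + m • f) p = 0 := by
        rw [om_add_left C hq, om_smul_left C hq, om_smul_left C hq,
          ((memP p).mp hp).1, ((memP p).mp hp).2]
        ring
      rw [m2, add_zero] at m1
      have key : q (p + (l • e + m • f)) (p + (l • e + m • f)) - q p p
          - q (l • e + m • f) (l • e + m • f)
          = q (p + (l • e + m • f)) (p + (l • e + m • f))
            - (q p p + q (l • e + m • f) (l • e + m • f)) := by ring
      rw [key]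
      exact m1
    have hGQ : ∀ z : M, q (G₀ z) (G₀ z) - q z z ∈ C.Λ := by
      intro z
      obtain ⟨l, hl⟩ : ∃ t, C.σ C.ε * C.om q f z = t := ⟨_, rfl⟩
      obtain ⟨m, hm⟩ : ∃ t, C.om q e z = t := ⟨_, rfl⟩
      have hz' : z = π z + (l • e + m • f) := by
        rw [← hl, ← hm]
        conv_lhs => rw [hdec z]
        abel
      have hGapp' : G₀ z = ↑(g' (πP z)) + (l • e + m • f) := by
        rw [← hl, ← hm]
        exact hGapp z
      have h1 := Qh ↑(g' (πP z)) (g' (πP z)).2 l m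
      have h2 := Qh (π z) (hπP z) l m
      have h4 : q ↑(g' (πP z)) ↑(g' (πP z)) - q (π z) (π z) ∈ C.Λ :=
        hg'iso.2 (πP z)
      have key : q (G₀ z) (G₀ z) - q z z
          = (q (↑(g' (πP z)) + (l • e + m • f)) (↑(g' (πP z)) + (l • e + m • f))
              - q ↑(g' (πP z)) ↑(g' (πP z)) - q (l • e + m • f) (l • e + m • f))
            - (q (π z + (l • e + m • f)) (π z + (l • e + m • f))
              - q (π z) (π z) - q (l • e + m • f) (l • e + m • f))
            + (q ↑(g' (πP z)) ↑(g' (πP z)) - q (π z) (π z)) := by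
        rw [← hGapp', ← hz']
        ring
      rw [key]
      exact C.Λ.add_mem (C.Λ.sub_mem h1 h2) h4
    have hGe : G₀ e = e := by
      rw [hGapp e, hee, hfe, sigma_eps C, inv_mul_cancel₀ (eps_ne C)]
      have hπPe : πP e = 0 := by
        apply Subtype.ext
        rw [hπPcoe, hπe]
        rfl
      rw [hπPe, map_zero]
      simp
    have hGinj : Function.Injective G₀ := by
      rw [← LinearMap.ker_eq_bot, LinearMap.ker_eq_bot']
      intro z hz
      have hm0 : C.om q e z = 0 := by
        have h1 : C.om q e (G₀ z) = 0 := by rw [hz]; exact om_zero_right C hq e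
        rw [hGapp z, om_add_right C hq, om_add_right C hq, om_smul_right C hq,
          om_smul_right C hq, hee, hef, ((memP _).mp (g' (πP z)).2).1] at h1
        linear_combination h1
      have hl0 : C.om q f z = 0 := by
        have h2 : C.om q f (G₀ z) = 0 := by rw [hz]; exact om_zero_right C hq f
        rw [hGapp z, om_add_right C hq, om_add_right C hq, om_smul_right C hq,
          om_smul_right C hq, hfe, hff, ((memP _).mp (g' (πP z)).2).2,
          sigma_eps C] at h2
        have h3 : C.om q f z = 0 := by
          linear_combination h2 - C.om q f z * (inv_mul_cancel₀ hεne)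
        exact h3
      have hπz : π z = 0 := by
        have h4 : G₀ z = ↑(g' (πP z)) := by
          rw [hGapp z, hm0, hl0]
          simp
        have h5 : (↑(g' (πP z)) : M) = 0 := by rw [← h4, hz]
        have h6 : g' (πP z) = 0 := Subtype.ext h5
        have h7 : πP z = 0 := by
          apply g'.injective
          rw [h6, map_zero]
        have := congrArg (fun (a : ↥P) => (a : M)) h7
        simpa [hπPcoe] using this
      have := hdec z
      rw [hπz, hm0, hl0] at this
      simpa using this
    have hGbij : Function.Bijective G₀ :=
      ⟨hGinj, (LinearMap.injective_iff_surjective).mp hGinj⟩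
    set G : M ≃ₗ[F] M := LinearEquiv.ofBijective G₀ hGbij with hGdef
    have hGcoe : ∀ z : M, G z = G₀ z := fun z => rfl
    -- the image of U' under G₀ is W
    have homeU : ∀ x ∈ U₂, C.om q e x = 0 := fun x hx => hU'.1 e heU' x (hU₂le hx)
    have homeW : ∀ y ∈ W₂, C.om q e y = 0 := fun y hy => hW.1 e heW y (hW₂le hy)
    have hmap : U'.map G₀ = W := by
      apply le_antisymm
      · rintro _ ⟨vv, hvv, rfl⟩
        rw [← hU₂sup] at hvv
        obtain ⟨s, hs, x, hx, rfl⟩ := Submodule.mem_sup.mp hvv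
        obtain ⟨a, rfl⟩ := Submodule.mem_span_singleton.mp hs
        rw [map_add, map_smul, hGe]
        apply W.add_mem (W.smul_mem a heW)
        have hπPxUh : πP x ∈ Uh := by
          show ((πP x : ↥P) : M) ∈ Ut
          rw [hπPcoe]
          exact ⟨x, hx, rfl⟩
        have hmem : g' (πP x) ∈ Wh := by
          rw [← hg'map]
          exact Submodule.mem_map_of_mem hπPxUh
        have hmem2 : (↑(g' (πP x)) : M) ∈ W := hWtW hmem
        rw [hGapp x, homeU x hx, zero_smul, add_zero]
        exact W.add_mem hmem2 (W.smul_mem _ heW)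
      · intro w hw
        rw [← hW₂sup] at hw
        obtain ⟨s, hs, y, hy, rfl⟩ := Submodule.mem_sup.mp hw
        obtain ⟨a, rfl⟩ := Submodule.mem_span_singleton.mp hs
        have hπyWh : (⟨π y, hπP y⟩ : ↥P) ∈ Wh := by
          show ((⟨π y, hπP y⟩ : ↥P) : M) ∈ Wt
          exact ⟨y, hy, rfl⟩
        rw [← hg'map] at hπyWh
        obtain ⟨uu, huu, hguu⟩ := hπyWh
        obtain ⟨x, hx, hπx⟩ := huu
        have hπPx : πP x = uu := Subtype.ext (by rw [hπPcoe]; exact hπx)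
        have hgu' : g' uu = ⟨π y, hπP y⟩ := hguu
        refine ⟨x + (a + C.σ C.ε * C.om q f y - C.σ C.ε * C.om q f x) • e, ?_, ?_⟩
        · exact U'.add_mem (hU₂le hx) (U'.smul_mem _ heU')
        · rw [map_add, map_smul, hGe, hGapp x, hπPx, hgu']
          rw [homeU x hx, zero_smul, add_zero]
          have hcoe : ((⟨π y, hπP y⟩ : ↥P) : M) = π y := rfl
          rw [hcoe]
          conv_rhs => rw [hdec y, homeW y hy, zero_smul, add_zero]
          module
    -- assemble
    refine ⟨h1.trans G, ⟨fun v w => ?_, fun v => ?_⟩, ?_⟩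
    · show C.om q (G (h1 v)) (G (h1 w)) = C.om q v w
      rw [hGcoe, hGcoe, hGom, hh1.1]
    · show q (G (h1 v)) (G (h1 v)) - q v v ∈ C.Λ
      rw [hGcoe]
      have key : q (G₀ (h1 v)) (G₀ (h1 v)) - q v v
          = (q (G₀ (h1 v)) (G₀ (h1 v)) - q (h1 v) (h1 v))
            + (q (h1 v) (h1 v) - q v v) := by ring
      rw [key]
      exact C.Λ.add_mem (hGQ (h1 v)) (hh1.2 v)
    · have hco : ((h1.trans G : M ≃ₗ[F] M) : M →ₗ[F] M)
          = G₀.comp (h1 : M →ₗ[F] M) := LinearMap.ext (fun z => rfl)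
      rw [hco, Submodule.map_comp, ← hU'def, hmap]
end Stmt11


open Stmt11 Submodule Module in
/-- The group of bijective isometries of a formed space `(E,q)` acts transitively on
isotropic subspaces with given dimension and given dimension of intersection with the
radical `R(E)`: if `U`, `W` are isotropic with `dim U = dim W` and
`dim (U ∩ R(E)) = dim (W ∩ R(E))`, there is a bijective isometry `g` with `g(U) = W`. -/
theorem stmt11 {F E : Type*} [Field F] [AddCommGroup E] [Module F E]
    [FiniteDimensional F E]
    (σ : F →+* F) (hσ : ∀ a : F, σ (σ a) = a)
    (ε : F) (hε : ε * σ ε = 1)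
    (Λ : AddSubgroup F)
    (hmin : ∀ a : F, a - ε * σ a ∈ Λ)
    (hmax : ∀ a ∈ Λ, a + ε * σ a = 0)
    (q : E → E → F) (hq : IsSesq σ q)
    (R : Submodule F E) (hR : (R : Set E) = radSet σ ε q (Λ : Set F))
    (U W : Submodule F E)
    (hU : IsIsotropic σ ε q (Λ : Set F) U) (hW : IsIsotropic σ ε q (Λ : Set F) W)
    (hdim : Module.finrank F U = Module.finrank F W)
    (hdimR : Module.finrank F ↥(U ⊓ R) = Module.finrank F ↥(W ⊓ R)) :
    ∃ g : E ≃ₗ[F] E,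
      (∀ v v' : E, omegaF σ ε q (g v) (g v') = omegaF σ ε q v v') ∧
      (∀ v : E, q (g v) (g v) - q v v ∈ Λ) ∧
      Submodule.map g.toLinearMap U = W := by
  classical
  -- the norm-closed form parameter Λ'
  set Λ' : AddSubgroup F :=
    { carrier := {t : F | ∀ a : F, a * σ a * t ∈ Λ}
      add_mem' := fun {x y} hx hy a => by
        rw [mul_add]; exact Λ.add_mem (hx a) (hy a)
      zero_mem' := fun a => by rw [mul_zero]; exact Λ.zero_mem
      neg_mem' := fun {x} hx a => by
        rw [mul_neg]; exact Λ.neg_mem (hx a) } with hΛ'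
  have memΛ' : ∀ t : F, t ∈ Λ' ↔ ∀ a : F, a * σ a * t ∈ Λ := fun t => Iff.rfl
  have hΛ'le : ∀ t ∈ Λ', t ∈ Λ := by
    intro t ht
    have := (memΛ' t).mp ht 1
    simpa using this
  set C : FormCtx F :=
    { σ := σ, hσ := hσ, ε := ε, hε := hε, Λ := Λ'
      hmin := by
        intro a
        rw [memΛ']
        intro c
        have key : c * σ c * (a - ε * σ a)
            = (c * σ c * a) - ε * σ (c * σ c * a) := by
          rw [map_mul, map_mul, hσ]; ring
        rw [key]; exact hmin _
      hmax := fun a ha => hmax a (hΛ'le a ha)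
      hnorm := by
        intro a t ht
        rw [memΛ']
        intro c
        have key : c * σ c * (a * σ a * t) = (c * a) * σ (c * a) * t := by
          rw [map_mul]; ring
        rw [key]; exact (memΛ' t).mp ht (c * a) } with hC
  have hqC : IsSesq C.σ q := hq
  -- U and W are isotropic with respect to Λ'
  have hUiso : IsIsotropic C.σ C.ε q (C.Λ : Set F) U := by
    refine ⟨hU.1, fun u hu => ?_⟩
    intro a
    rw [← Qsmul C hqC]
    exact hU.2 _ (U.smul_mem a hu)
  have hWiso : IsIsotropic C.σ C.ε q (C.Λ : Set F) W := by
    refine ⟨hW.1, fun u hu => ?_⟩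
    intro a
    rw [← Qsmul C hqC]
    exact hW.2 _ (W.smul_mem a hu)
  -- R is also the radical for Λ'
  have hRrad : (R : Set E) = radSet C.σ C.ε q (C.Λ : Set F) := by
    ext v
    constructor
    · intro hv
      have h1 : v ∈ radSet σ ε q (Λ : Set F) := by rw [← hR]; exact hv
      refine ⟨h1.1, ?_⟩
      intro a
      rw [← Qsmul C hqC]
      have h2 : a • v ∈ R := R.smul_mem a hv
      have h3 : a • v ∈ radSet σ ε q (Λ : Set F) := by rw [← hR]; exact h2
      exact h3.2
    · intro hv
      rw [hR]
      exact ⟨hv.1, hΛ'le _ hv.2⟩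
  have hradmem : ∀ v ∈ R, (∀ w, C.om q w v = 0) ∧ q v v ∈ C.Λ := by
    intro v hv
    have : v ∈ radSet C.σ C.ε q (C.Λ : Set F) := by rw [← hRrad]; exact hv
    exact ⟨this.1, this.2⟩
  have hradmem' : ∀ v : E, (∀ w, C.om q w v = 0) → q v v ∈ C.Λ → v ∈ R := by
    intro v h1 h2
    have : v ∈ radSet C.σ C.ε q (C.Λ : Set F) := ⟨h1, h2⟩
    rw [← hRrad] at this
    exact this
  -- decompose U and W
  obtain ⟨U₁, hU₁le, hU₁inf, hU₁sup⟩ := exists_compl_le (A := U ⊓ R) (B := U) inf_le_left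
  obtain ⟨W₁, hW₁le, hW₁inf, hW₁sup⟩ := exists_compl_le (A := W ⊓ R) (B := W) inf_le_left
  have hU₁iso : IsIsotropic C.σ C.ε q (C.Λ : Set F) U₁ :=
    ⟨fun a ha b hb => hUiso.1 a (hU₁le ha) b (hU₁le hb),
     fun a ha => hUiso.2 a (hU₁le ha)⟩
  have hW₁iso : IsIsotropic C.σ C.ε q (C.Λ : Set F) W₁ :=
    ⟨fun a ha b hb => hWiso.1 a (hW₁le ha) b (hW₁le hb),
     fun a ha => hWiso.2 a (hW₁le ha)⟩
  have hU₁K : ∀ v ∈ U₁, (∀ w, C.om q w v = 0) → v = 0 := by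
    intro v hv hall
    have hvR : v ∈ R := hradmem' v hall (hUiso.2 v (hU₁le hv))
    have : v ∈ (U ⊓ R) ⊓ U₁ := ⟨⟨hU₁le hv, hvR⟩, hv⟩
    rw [hU₁inf] at this
    exact this
  have hW₁K : ∀ v ∈ W₁, (∀ w, C.om q w v = 0) → v = 0 := by
    intro v hv hall
    have hvR : v ∈ R := hradmem' v hall (hWiso.2 v (hW₁le hv))
    have : v ∈ (W ⊓ R) ⊓ W₁ := ⟨⟨hW₁le hv, hvR⟩, hv⟩
    rw [hW₁inf] at this
    exact this
  have hfrU : finrank F ↥(U ⊓ R) + finrank F U₁ = finrank F U := by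
    have h := Submodule.finrank_sup_add_finrank_inf_eq (U ⊓ R) U₁
    rw [hU₁sup, hU₁inf, finrank_bot] at h
    omega
  have hfrW : finrank F ↥(W ⊓ R) + finrank F W₁ = finrank F W := by
    have h := Submodule.finrank_sup_add_finrank_inf_eq (W ⊓ R) W₁
    rw [hW₁sup, hW₁inf, finrank_bot] at h
    omega
  have hrk1 : finrank F W₁ = finrank F U₁ := by omega
  obtain ⟨g₁, hg₁iso, hg₁map⟩ := coreT C (finrank F U₁) q hqC U₁ W₁
    hU₁iso hW₁iso hU₁K hW₁K rfl hrk1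
  -- g₁ maps R into R
  have hg₁R : ∀ v ∈ R, g₁ v ∈ R := by
    intro v hv
    apply hradmem'
    · intro w
      have h1 := hg₁iso.1 (g₁.symm w) v
      rw [g₁.apply_symm_apply] at h1
      rw [h1]
      exact (hradmem v hv).1 _
    · have h1 := hg₁iso.2 v
      have key : q (g₁ v) (g₁ v)
          = (q (g₁ v) (g₁ v) - q v v) + q v v := by ring
      rw [key]
      exact C.Λ.add_mem h1 (hradmem v hv).2
  -- radical correction g₂
  set A : Submodule F E := (U ⊓ R).map (g₁ : E →ₗ[F] E) with hA
  have hAR : A ≤ R := by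
    rintro _ ⟨x, hx, rfl⟩
    exact hg₁R x hx.2
  have hW₀R : W ⊓ R ≤ R := inf_le_right
  have hfrA : finrank F ↥(Submodule.comap R.subtype A)
      = finrank F ↥(Submodule.comap R.subtype (W ⊓ R)) := by
    rw [(Submodule.comapSubtypeEquivOfLe hAR).finrank_eq,
      (Submodule.comapSubtypeEquivOfLe hW₀R).finrank_eq, hA,
      LinearEquiv.finrank_map_eq]
    exact hdimR
  obtain ⟨h, hhmap⟩ := exists_equiv_map_eq (Submodule.comap R.subtype A)
    (Submodule.comap R.subtype (W ⊓ R)) hfrA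
  -- complement S of R containing W₁
  have hW₁R : W₁ ⊓ R = ⊥ := by
    rw [eq_bot_iff]
    rintro v ⟨hv1, hv2⟩
    have : v ∈ (W ⊓ R) ⊓ W₁ := ⟨⟨hW₁le hv1, hv2⟩, hv1⟩
    rw [hW₁inf] at this
    exact this
  obtain ⟨T, hT⟩ := Submodule.exists_isCompl (R ⊔ W₁)
  have hScompl : IsCompl R (W₁ ⊔ T) := by
    constructor
    · rw [disjoint_iff]
      rw [eq_bot_iff]
      rintro v ⟨hvR, hvS⟩
      obtain ⟨w, hw, t, ht, rfl⟩ := Submodule.mem_sup.mp hvS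
      have htmem : t ∈ (R ⊔ W₁) ⊓ T := by
        constructor
        · have : (w + t) - w ∈ R ⊔ W₁ :=
            Submodule.sub_mem _ (Submodule.mem_sup_left hvR)
              (Submodule.mem_sup_right hw)
          simpa using this
        · exact ht
      rw [hT.inf_eq_bot] at htmem
      rw [htmem, add_zero] at hvR ⊢
      have : w ∈ W₁ ⊓ R := ⟨hw, hvR⟩
      rw [hW₁R] at this
      exact this
    · rw [codisjoint_iff, ← sup_assoc, hT.sup_eq_top]
  obtain ⟨g₂, hg₂R, hg₂S, hg₂r⟩ := exists_extend_pair hScompl h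
  have hg₂iso : IsIso C q ⇑g₂ := rad_iso C hqC hRrad (⇑g₂) hg₂R
  -- mapping computations
  have hmapA : A.map (g₂ : E →ₗ[F] E) = W ⊓ R := by
    apply le_antisymm
    · rintro _ ⟨a, ha, rfl⟩
      have h1 : (⟨a, hAR ha⟩ : ↥R) ∈ Submodule.comap R.subtype A := ha
      have h2 : h ⟨a, hAR ha⟩ ∈ Submodule.comap R.subtype (W ⊓ R) := by
        rw [← hhmap]
        exact Submodule.mem_map_of_mem h1
      have h3 := hg₂r ⟨a, hAR ha⟩
      show g₂ a ∈ W ⊓ R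
      rw [show g₂ a = ((h ⟨a, hAR ha⟩ : ↥R) : E) from h3]
      exact h2
    · intro w hw
      have h1 : (⟨w, hW₀R hw⟩ : ↥R) ∈ Submodule.comap R.subtype (W ⊓ R) := hw
      rw [← hhmap] at h1
      obtain ⟨r, hr, hr2⟩ := h1
      refine ⟨(r : E), hr, ?_⟩
      show g₂ ↑r = w
      rw [hg₂r r, show h r = ⟨w, hW₀R hw⟩ from hr2]
  have hmapW₁ : W₁.map (g₂ : E →ₗ[F] E) = W₁ := by
    apply le_antisymm
    · rintro _ ⟨w, hw, rfl⟩
      show g₂ w ∈ W₁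
      rw [hg₂S w (Submodule.mem_sup_left hw)]
      exact hw
    · intro w hw
      exact ⟨w, hw, hg₂S w (Submodule.mem_sup_left hw)⟩
  -- assemble
  refine ⟨g₁.trans g₂, fun v v' => ?_, fun v => ?_, ?_⟩
  · show C.om q (g₂ (g₁ v)) (g₂ (g₁ v')) = C.om q v v'
    rw [hg₂iso.1, hg₁iso.1]
  · have h1 := hg₂iso.2 (g₁ v)
    have h2 := hg₁iso.2 v
    have key : q ((g₁.trans g₂) v) ((g₁.trans g₂) v) - q v v
        = (q (g₂ (g₁ v)) (g₂ (g₁ v)) - q (g₁ v) (g₁ v))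
          + (q (g₁ v) (g₁ v) - q v v) := by
      rw [LinearEquiv.trans_apply]
      ring
    refine hΛ'le _ ?_
    rw [key]
    exact C.Λ.add_mem h1 h2
  · have hco : ((g₁.trans g₂ : E ≃ₗ[F] E) : E →ₗ[F] E)
        = (g₂ : E →ₗ[F] E).comp (g₁ : E →ₗ[F] E) := LinearMap.ext (fun z => rfl)
    show Submodule.map ((g₁.trans g₂ : E ≃ₗ[F] E) : E →ₗ[F] E) U = W
    rw [hco, Submodule.map_comp]
    have hUdec : U = (U ⊓ R) ⊔ U₁ := hU₁sup.symm
    rw [hUdec, Submodule.map_sup, hg₁map, Submodule.map_sup, ← hA, hmapA, hmapW₁]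
    exact hW₁sup
end

section
/- Let (E,q) be a formed space and A, B, C ≤ E subspaces with A ∩ C = 0 = B ∩ C, and let f : A → B be a bijective isometry. (1) If C ≤ A^⊥ ∩ B^⊥, then the map f ⊕ id : A ⊕ C → B ⊕ C, a + c ↦ f(a) + c, is an isometry. (2) If A = span{a}, B = span{b} with f(a) = b, then the same conclusion holds under the weaker assumption that C ≤ (a−b)^⊥. -/
/-- The orthogonal complement of a set `S ⊆ E`: `{v : ω_q(v,u) = 0 for all u ∈ S}`. -/
def perpSet {F E : Type*} [Field F] [AddCommGroup E] [Module F E]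
    (σ : F →+* F) (ε : F) (q : E → E → F) (S : Set E) : Set E :=
  {v : E | ∀ u ∈ S, omegaF σ ε q v u = 0}

/-- Let `A,B,C ≤ E` be subspaces of a formed space with `A ∩ C = 0 = B ∩ C`, and
`f : A → B` a bijective isometry.
(1) If `C ≤ A^⊥ ∩ B^⊥` then `f ⊕ id : A ⊕ C → B ⊕ C`, `a + c ↦ f(a) + c`, is an isometry.
(2) If `A = ⟨a⟩`, `B = ⟨b⟩` with `f(a) = b`, the same holds assuming only `C ≤ (a−b)^⊥`. -/
theorem stmt13 {F E : Type*} [Field F] [AddCommGroup E] [Module F E]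
    [FiniteDimensional F E]
    (σ : F →+* F) (hσ : ∀ a : F, σ (σ a) = a)
    (ε : F) (hε : ε * σ ε = 1)
    (Λ : AddSubgroup F)
    (hmin : ∀ a : F, a - ε * σ a ∈ Λ)
    (hmax : ∀ a ∈ Λ, a + ε * σ a = 0)
    (q : E → E → F) (hq : IsSesq σ q)
    (A B C : Submodule F E) (hAC : A ⊓ C = ⊥) (hBC : B ⊓ C = ⊥)
    (f : A →ₗ[F] B) (hfbij : Function.Bijective f)
    (hfω : ∀ x x' : A, omegaF σ ε q (f x : E) (f x' : E) = omegaF σ ε q (x : E) (x' : E))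
    (hfQ : ∀ x : A, q (f x : E) (f x : E) - q (x : E) (x : E) ∈ Λ) :
    (((C : Set E) ⊆ perpSet σ ε q (A : Set E) ∩ perpSet σ ε q (B : Set E)) →
      ∀ (x x' : A) (c c' : C),
        omegaF σ ε q ((f x : E) + c) ((f x' : E) + c')
          = omegaF σ ε q ((x : E) + c) ((x' : E) + c') ∧
        q ((f x : E) + c) ((f x : E) + c) - q ((x : E) + c) ((x : E) + c) ∈ Λ) ∧
    (∀ (a b : E) (ha : a ∈ A), A = Submodule.span F {a} → B = Submodule.span F {b} →
      (f ⟨a, ha⟩ : E) = b → (C : Set E) ⊆ perpSet σ ε q {a - b} →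
      ∀ (x x' : A) (c c' : C),
        omegaF σ ε q ((f x : E) + c) ((f x' : E) + c')
          = omegaF σ ε q ((x : E) + c) ((x' : E) + c') ∧
        q ((f x : E) + c) ((f x : E) + c) - q ((x : E) + c) ((x : E) + c) ∈ Λ) := by

  obtain ⟨hq1, hq2, hq3⟩ := hq
  have hqsl : ∀ (t : F) (v w : E), q (t • v) w = σ t * q v w := by
    intro t v w
    have h := hq3 t 1 v w
    simpa using h
  have hqsr : ∀ (t : F) (v w : E), q v (t • w) = q v w * t := by
    intro t v w
    have h := hq3 1 t v w
    simpa using h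
  have hq0r : ∀ v : E, q v 0 = 0 := by
    intro v
    have h := hq2 v 0 0
    rw [add_zero] at h
    exact (left_eq_add.mp h)
  have hq0l : ∀ v : E, q 0 v = 0 := by
    intro v
    have h := hq1 0 0 v
    rw [add_zero] at h
    exact (left_eq_add.mp h)
  have hqsubr : ∀ v w w' : E, q v (w - w') = q v w - q v w' := by
    intro v w w'
    have h := hq2 v (w - w') w'
    rw [sub_add_cancel] at h
    exact eq_sub_of_add_eq h.symm
  have hqsubl : ∀ v v' w : E, q (v - v') w = q v w - q v' w := by
    intro v v' w
    have h := hq1 (v - v') v' w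
    rw [sub_add_cancel] at h
    exact eq_sub_of_add_eq h.symm
  have hωsym : ∀ v w : E, omegaF σ ε q w v = ε * σ (omegaF σ ε q v w) := by
    intro v w
    simp only [omegaF, map_add, map_mul, hσ, mul_add, ← mul_assoc, hε, one_mul]
    ring
  constructor
  · intro hC x x' c c'
    have hcA : omegaF σ ε q (c : E) (x : E) = 0 := (hC c.2).1 _ x.2
    have hcA' : omegaF σ ε q (c : E) (x' : E) = 0 := (hC c.2).1 _ x'.2
    have hc'A : omegaF σ ε q (c' : E) (x : E) = 0 := (hC c'.2).1 _ x.2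
    have hcB : omegaF σ ε q (c : E) (f x : E) = 0 := (hC c.2).2 _ (f x).2
    have hcB' : omegaF σ ε q (c : E) (f x' : E) = 0 := (hC c.2).2 _ (f x').2
    have hc'B : omegaF σ ε q (c' : E) (f x : E) = 0 := (hC c'.2).2 _ (f x).2
    have hxc' : omegaF σ ε q (f x : E) (c' : E) = 0 := by
      rw [hωsym, hc'B]; simp
    have hx0c' : omegaF σ ε q (x : E) (c' : E) = 0 := by
      rw [hωsym, hc'A]; simp
    have hfw := hfω x x'
    constructor
    · simp only [omegaF, hq1, hq2, map_add] at hfw hxc' hcB' hx0c' hcA' ⊢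
      linear_combination hfw + hxc' + hcB' - hx0c' - hcA'
    · have h1 : q (c : E) (f x : E) + ε * σ (q (f x : E) (c : E)) = 0 := hcB
      have h2 : q (c : E) (x : E) + ε * σ (q (x : E) (c : E)) = 0 := hcA
      have key : q ((f x : E) + c) ((f x : E) + c) - q ((x : E) + c) ((x : E) + c)
          = (q (f x : E) (f x : E) - q (x : E) (x : E))
            + ((q (f x : E) (c : E) - ε * σ (q (f x : E) (c : E)))
               - (q (x : E) (c : E) - ε * σ (q (x : E) (c : E)))) := by
        simp only [hq1, hq2]
        linear_combination h1 - h2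
      rw [key]
      exact Λ.add_mem (hfQ x) (Λ.sub_mem (hmin _) (hmin _))
  · intro a b ha hA hB hfab hC x x' c c'
    have hxa : (x : E) ∈ Submodule.span F {a} := hA ▸ x.2
    obtain ⟨t, ht⟩ := Submodule.mem_span_singleton.mp hxa
    have hxa' : (x' : E) ∈ Submodule.span F {a} := hA ▸ x'.2
    obtain ⟨t', ht'⟩ := Submodule.mem_span_singleton.mp hxa'
    have hxE : (x : E) = t • a := ht.symm
    have hxE' : (x' : E) = t' • a := ht'.symm
    have hfxE : (f x : E) = t • b := by
      have hx : x = t • (⟨a, ha⟩ : A) := Subtype.ext (by simp [hxE])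
      rw [hx, map_smul]
      simp [hfab]
    have hfxE' : (f x' : E) = t' • b := by
      have hx : x' = t' • (⟨a, ha⟩ : A) := Subtype.ext (by simp [hxE'])
      rw [hx, map_smul]
      simp [hfab]
    have hωc : omegaF σ ε q (c : E) (a - b) = 0 := hC c.2 _ rfl
    have hωc' : omegaF σ ε q (c' : E) (a - b) = 0 := hC c'.2 _ rfl
    have hωc'' : omegaF σ ε q (a - b) (c' : E) = 0 := by
      rw [hωsym, hωc']; simp
    have hωcE : q (c : E) a - q (c : E) b
        + ε * (σ (q a (c : E)) - σ (q b (c : E))) = 0 := by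
      have h := hωc
      simp only [omegaF, hqsubr, hqsubl, map_sub] at h
      linear_combination h
    have hωc'E : q a (c' : E) - q b (c' : E)
        + ε * (σ (q (c' : E) a) - σ (q (c' : E) b)) = 0 := by
      have h := hωc''
      simp only [omegaF, hqsubr, hqsubl, map_sub] at h
      linear_combination h
    have hfw := hfω x x'
    rw [hfxE, hfxE', hxE, hxE'] at hfw
    constructor
    · rw [hfxE, hfxE', hxE, hxE']
      simp only [omegaF, hq1, hq2, hqsl, hqsr, map_add, map_mul, hσ] at hfw ⊢
      linear_combination hfw - σ t * hωc'E - t' * hωcE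
    · have hQ := hfQ x
      rw [hfxE, hxE] at hQ
      have key : q ((t • b) + (c : E)) ((t • b) + (c : E))
            - q ((t • a) + (c : E)) ((t • a) + (c : E))
          = (q (t • b) (t • b) - q (t • a) (t • a))
            + ((σ t * (q b (c : E) - q a (c : E)))
               - ε * σ (σ t * (q b (c : E) - q a (c : E)))) := by
        simp only [hq1, hq2, hqsl, hqsr, map_mul, map_sub, hσ]
        linear_combination (-t) * hωcE
      rw [hfxE, hxE, key]
      exact Λ.add_mem hQ (hmin _)
end

section
/- Let (E,q) be a formed space and U, W ≤ E subspaces such that U is isotropic and W + U^⊥ = E. Then U ∩ W^⊥ ≤ R(E). In particular, if W is also isotropic, then U ∩ W ≤ R(E). -/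
/-- Let `(E,q)` be a formed space and `U, W ≤ E` subspaces with `U` isotropic and
`W + U^⊥ = E`. Then `U ∩ W^⊥ ≤ R(E)`. In particular, if `W` is also isotropic,
then `U ∩ W ≤ R(E)`. -/
theorem stmt16 {F E : Type*} [Field F] [AddCommGroup E] [Module F E]
    [FiniteDimensional F E]
    (σ : F →+* F) (hσ : ∀ a : F, σ (σ a) = a)
    (ε : F) (hε : ε * σ ε = 1)
    (Λ : AddSubgroup F)
    (hmin : ∀ a : F, a - ε * σ a ∈ Λ)
    (hmax : ∀ a ∈ Λ, a + ε * σ a = 0)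
    (q : E → E → F) (hq : IsSesq σ q)
    (U W : Submodule F E)
    (hU : IsIsotropic σ ε q (Λ : Set F) U)
    (hsum : ∀ v : E, ∃ w ∈ W, ∃ p ∈ perpSet σ ε q (U : Set E), v = w + p) :
    (∀ v ∈ U, v ∈ perpSet σ ε q (W : Set E) → v ∈ radSet σ ε q (Λ : Set F)) ∧
    (IsIsotropic σ ε q (Λ : Set F) W →
      ∀ v ∈ U, v ∈ W → v ∈ radSet σ ε q (Λ : Set F)) := by
  obtain ⟨ha1, ha2, hs⟩ := hq
  have hsymm : ∀ v w : E, omegaF σ ε q w v = ε * σ (omegaF σ ε q v w) := by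
    intro v w
    simp only [omegaF, map_add, map_mul, mul_add, hσ]
    rw [← mul_assoc, hε, one_mul, add_comm]
  have main : ∀ v ∈ U, v ∈ perpSet σ ε q (W : Set E) → v ∈ radSet σ ε q (Λ : Set F) := by
    intro v hvU hvW
    constructor
    · intro w
      obtain ⟨w₀, hw₀, p, hp, rfl⟩ := hsum w
      have h1 : omegaF σ ε q w₀ v = 0 := by
        rw [hsymm, hvW w₀ hw₀, map_zero, mul_zero]
      have : omegaF σ ε q (w₀ + p) v = omegaF σ ε q w₀ v + omegaF σ ε q p v := by
        simp only [omegaF, ha1, ha2, map_add]; ring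
      rw [this, h1, hp v hvU, add_zero]
    · exact hU.2 v hvU
  refine ⟨main, fun hW v hvU hvW => main v hvU ?_⟩
  intro u hu
  exact hW.1 v hvW u hu
end
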